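/- Let n ≥ 1 and α ∈ ℝ. There exist constants c, C > 0, depending only on n and α, such that for every finite positive Borel measure μ on S_n, with Cauchy transform C_[μ](z) = ∫_{S_n} (1 − Σ_{i=1}^n z_i ζ_i)^{−n} dμ(ζ) and moments μ*(j) = ∫_{S_n} ζ^j dμ(ζ), one has (as inequalities in [0,∞]): c·Σ_{k=0}^∞ Σ_{|j|=k} (k+1)^{n−1−α}·(k!/j!)·|μ*(j)|² ≤ ‖C_[μ]‖²_{−α} ≤ C·Σ_{k=0}^∞ Σ_{|j|=k} (k+1)^{n−1−α}·(k!/j!)·|μ*(j)|², where the inner sums run over multi-indices j ∈ ℕⁿ with |j| = k. -/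

import Mathlib

open MeasureTheory
open scoped ENNReal Classical

noncomputable section

/-- The ambient space `ℂⁿ` with the Euclidean norm; the unit ball `𝔹ₙ` is
`Metric.ball (0 : En n) 1` and the unit sphere `𝕊ₙ` is `Metric.sphere (0 : En n) 1`. -/
abbrev En (n : ℕ) := EuclideanSpace ℂ (Fin n)

/-- Lebesgue measure on `ℂⁿ`, transported along the definitional equality
`EuclideanSpace ℂ (Fin n) = (Fin n → ℂ)`. -/
noncomputable instance (n : ℕ) : MeasureSpace (En n) where
  toMeasurableSpace := MeasurableSpace.comap (WithLp.ofLp (p := 2)) inferInstance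
  volume := @Measure.map (Fin n → ℂ) (En n) _
    (MeasurableSpace.comap (WithLp.ofLp (p := 2)) inferInstance) (WithLp.toLp 2) volume

/-- `|k| = k₁ + … + kₙ` for a multi-index `k`. -/
def mOrd {n : ℕ} (k : Fin n → ℕ) : ℕ := ∑ i, k i

/-- `k! = k₁! ⋯ kₙ!` for a multi-index `k`. -/
def mFact {n : ℕ} (k : Fin n → ℕ) : ℕ := ∏ i, (k i).factorial

/-- `z^k = z₁^{k₁} ⋯ zₙ^{kₙ}` for a multi-index `k`. -/
def mPow {n : ℕ} (z : En n) (k : Fin n → ℕ) : ℂ := ∏ i, z i ^ k i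

/-- The weight `(n+|k|)^α · (n-1)!·k! / (n-1+|k|)!` appearing in the Dirichlet-type norm. -/
def dWeight (n : ℕ) (α : ℝ) (k : Fin n → ℕ) : ℝ :=
  ((n : ℝ) + mOrd k) ^ α * (((n - 1).factorial * mFact k : ℕ) : ℝ) /
    (((n - 1 + mOrd k).factorial : ℕ) : ℝ)

/-- The squared Dirichlet-type norm `‖·‖²_α` of a family of Taylor coefficients,
valued in `[0,∞]`. -/
def Dnorm2 (n : ℕ) (α : ℝ) (a : (Fin n → ℕ) → ℂ) : ℝ≥0∞ :=
  ∑' k : Fin n → ℕ, ENNReal.ofReal (dWeight n α k * ‖a k‖ ^ 2)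

/-- `a` is the family of power-series (Taylor) coefficients of `f` on the unit ball:
`f z = Σ_k a_k z^k` for every `z` in the ball. -/
def HasCoeffs (n : ℕ) (f : En n → ℂ) (a : (Fin n → ℕ) → ℂ) : Prop :=
  ∀ z ∈ Metric.ball (0 : En n) 1, HasSum (fun k => a k * mPow z k) (f z)

/-- The squared Dirichlet-type norm `‖f‖²_α` of a function, computed through its
power-series coefficients (which are unique when they exist). -/
def DnormF2 (n : ℕ) (α : ℝ) (f : En n → ℂ) : ℝ≥0∞ :=
  sInf {x | ∃ a, HasCoeffs n f a ∧ x = Dnorm2 n α a}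

/-- Membership in the Dirichlet-type space `D_α(𝔹ₙ)`. -/
def MemD (n : ℕ) (α : ℝ) (f : En n → ℂ) : Prop :=
  DifferentiableOn ℂ f (Metric.ball 0 1) ∧ ∃ a, HasCoeffs n f a ∧ Dnorm2 n α a < ⊤

/-- `f` is a cyclic vector of `D_α(𝔹ₙ)`: for every `ε > 0` there is a polynomial `q`
with `‖q·f - 1‖²_α < ε`. -/
def CyclicD (n : ℕ) (α : ℝ) (f : En n → ℂ) : Prop :=
  ∀ ε : ℝ, 0 < ε → ∃ q : MvPolynomial (Fin n) ℂ,
    DnormF2 n α (fun z => MvPolynomial.eval (fun i => z i) q * f z - 1) < ENNReal.ofReal ε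

/-- The Cauchy transform `C_[μ](z) = ∫_{𝕊ₙ} (1 - Σᵢ zᵢζᵢ)^{-n} dμ(ζ)`. -/
def cauchyT (n : ℕ) (μ : Measure (En n)) (z : En n) : ℂ :=
  ∫ ζ, (1 - ∑ i, z i * ζ i) ^ (-(n : ℂ)) ∂μ

/-- The moment sum `Σ_{j∈ℕⁿ} (|j|+1)^{n-1-α}·(|j|!/j!)·|μ*(j)|²`, where
`μ*(j) = ∫ ζ^j dμ(ζ)`. -/
def momSum (n : ℕ) (α : ℝ) (μ : Measure (En n)) : ℝ≥0∞ :=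
  ∑' j : Fin n → ℕ, ENNReal.ofReal (((mOrd j : ℝ) + 1) ^ ((n : ℝ) - 1 - α) *
    (((mOrd j).factorial : ℝ) / (mFact j : ℝ)) * ‖∫ ζ, mPow ζ j ∂μ‖ ^ 2)

/-! ### Auxiliary material -/

section Aux

open Finset Complex
open scoped Real

instance (n : ℕ) : BorelSpace (En n) := inferInstanceAs (BorelSpace (PiLp 2 (fun _ : Fin n => ℂ)))

/-- The coefficient `(n-1+|j|)!/((n-1)!·j!)` as a natural number. -/
def Bcoef (n : ℕ) (j : Fin n → ℕ) : ℕ :=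
  (n - 1 + mOrd j).choose (mOrd j) * Nat.multinomial Finset.univ j

def mBox (n K : ℕ) : Finset (Fin n → ℕ) :=
  (Finset.range (K+1)).biUnion fun k => Finset.piAntidiag Finset.univ k

lemma mem_mBox {n K : ℕ} {j : Fin n → ℕ} : j ∈ mBox n K ↔ mOrd j ≤ K := by
  simp only [mBox, Finset.mem_biUnion, Finset.mem_range, Finset.mem_piAntidiag]
  constructor
  · rintro ⟨k, hk, hk2, -⟩
    have : mOrd j = k := hk2
    omega
  · exact fun h => ⟨mOrd j, by omega, rfl, fun i _ => Finset.mem_univ i⟩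

lemma mBox_mono {n : ℕ} : Monotone (mBox n) := fun _ _ h _ hj =>
  mem_mBox.2 (le_trans (mem_mBox.1 hj) h)

lemma tendsto_mBox {n : ℕ} : Filter.Tendsto (mBox n) Filter.atTop Filter.atTop :=
  Filter.tendsto_atTop_finset_of_monotone mBox_mono fun j => ⟨mOrd j, mem_mBox.2 le_rfl⟩

lemma sum_piAntidiag_eq {R : Type*} [CommSemiring R] (n : ℕ) (x : Fin n → R) (k : ℕ) :
    ∑ j ∈ Finset.piAntidiag Finset.univ k, (Bcoef n j : R) * ∏ i, x i ^ j i
      = ((n - 1 + k).choose k : R) * (∑ i, x i) ^ k := by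
  rw [Finset.sum_pow_eq_sum_piAntidiag, Finset.mul_sum]
  refine Finset.sum_congr rfl fun j hj => ?_
  rw [Finset.mem_piAntidiag] at hj
  have hord : mOrd j = k := hj.1
  rw [Bcoef, hord]
  push_cast
  ring

lemma sum_mBox_eq {R : Type*} [AddCommMonoid R] (n K : ℕ) (F : (Fin n → ℕ) → R) :
    ∑ j ∈ mBox n K, F j
      = ∑ k ∈ Finset.range (K+1), ∑ j ∈ Finset.piAntidiag Finset.univ k, F j := by
  rw [mBox, Finset.sum_biUnion]
  intro a _ b _ hab
  simp only [Function.onFun]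
  refine Finset.disjoint_left.2 fun j hja hjb => hab ?_
  rw [Finset.mem_piAntidiag] at hja hjb
  rw [← hja.1, ← hjb.1]

lemma choose_swap (m k : ℕ) : (m + k).choose k = (k + m).choose m := by
  rw [Nat.add_comm]; exact Nat.choose_symm_add

section Expansion

variable {𝕜 : Type*} [RCLike 𝕜]

lemma sum_mBox_Bcoef (n : ℕ) (x : Fin n → 𝕜) (K : ℕ) :
    ∑ j ∈ mBox n K, (Bcoef n j : 𝕜) * ∏ i, x i ^ j i
      = ∑ k ∈ Finset.range (K+1), ((n - 1 + k).choose k : 𝕜) * (∑ i, x i) ^ k := by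
  rw [sum_mBox_eq]
  exact Finset.sum_congr rfl fun k _ => sum_piAntidiag_eq n x k

lemma norm_Bcoef_term (n : ℕ) (x : Fin n → 𝕜) (j : Fin n → ℕ) :
    ‖(Bcoef n j : 𝕜) * ∏ i, x i ^ j i‖ = (Bcoef n j : ℝ) * ∏ i, ‖x i‖ ^ j i := by
  rw [norm_mul, norm_prod]
  simp [RCLike.norm_natCast]

/-- The fundamental expansion: `Σ_j Bcoef_j x^j = (1-Σx_i)^{-n}` when `Σ‖x_i‖ < 1`. -/
lemma hasSum_Bcoef (n : ℕ) (hn : 1 ≤ n) (x : Fin n → 𝕜) (hx : ∑ i, ‖x i‖ < 1) :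
    HasSum (fun j : Fin n → ℕ => (Bcoef n j : 𝕜) * ∏ i, x i ^ j i)
      (1 / (1 - ∑ i, x i) ^ n) := by
  set u : ℝ := ∑ i, ‖x i‖ with hu
  have hu0 : 0 ≤ u := Finset.sum_nonneg fun i _ => norm_nonneg _
  have hwu : ‖∑ i, x i‖ ≤ u := norm_sum_le _ _
  have hw : ‖∑ i, x i‖ < 1 := lt_of_le_of_lt hwu hx
  have hreal : HasSum (fun k : ℕ => ((k + (n-1)).choose (n-1) : ℝ) * u ^ k)
      (1 / (1 - u) ^ n) := by
    have := hasSum_choose_mul_geometric_of_norm_lt_one (𝕜 := ℝ) (n-1)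
      (r := u) (by rwa [Real.norm_eq_abs, _root_.abs_of_nonneg hu0])
    simpa [Nat.sub_add_cancel hn] using this
  have hbound : ∀ S : Finset (Fin n → ℕ),
      ∑ j ∈ S, ‖(Bcoef n j : 𝕜) * ∏ i, x i ^ j i‖ ≤ 1 / (1 - u) ^ n := by
    intro S
    have hSsub : S ⊆ mBox n (S.sup mOrd) := fun j hj => mem_mBox.2 (Finset.le_sup hj)
    calc ∑ j ∈ S, ‖(Bcoef n j : 𝕜) * ∏ i, x i ^ j i‖
        ≤ ∑ j ∈ mBox n (S.sup mOrd), ‖(Bcoef n j : 𝕜) * ∏ i, x i ^ j i‖ :=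
          Finset.sum_le_sum_of_subset_of_nonneg hSsub fun _ _ _ => norm_nonneg _
      _ = ∑ k ∈ Finset.range (S.sup mOrd + 1), ((n - 1 + k).choose k : ℝ) * u ^ k := by
          simp_rw [norm_Bcoef_term]
          have := sum_mBox_Bcoef (𝕜 := ℝ) n (fun i => ‖x i‖) (S.sup mOrd)
          simpa using this
      _ ≤ 1 / (1 - u) ^ n := by
          refine sum_le_hasSum (L := SummationFilter.unconditional ℕ) _ (fun k _ => ?_) ?_
          · positivity
          · convert hreal using 2 with k
            rw [choose_swap]
  have hsummable : Summable (fun j : Fin n → ℕ => (Bcoef n j : 𝕜) * ∏ i, x i ^ j i) := by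
    apply Summable.of_norm
    exact summable_of_sum_le (fun j => norm_nonneg _) hbound
  have htend1 : Filter.Tendsto (fun K => ∑ j ∈ mBox n K, (Bcoef n j : 𝕜) * ∏ i, x i ^ j i)
      Filter.atTop (nhds (∑' j, (Bcoef n j : 𝕜) * ∏ i, x i ^ j i)) :=
    hsummable.hasSum.comp tendsto_mBox
  have hcomplex : HasSum (fun k : ℕ => ((k + (n-1)).choose (n-1) : 𝕜) * (∑ i, x i) ^ k)
      (1 / (1 - ∑ i, x i) ^ n) := by
    have := hasSum_choose_mul_geometric_of_norm_lt_one (𝕜 := 𝕜) (n-1) (r := ∑ i, x i) hw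
    simpa [Nat.sub_add_cancel hn] using this
  have htend2 : Filter.Tendsto (fun K => ∑ j ∈ mBox n K, (Bcoef n j : 𝕜) * ∏ i, x i ^ j i)
      Filter.atTop (nhds (1 / (1 - ∑ i, x i) ^ n)) := by
    have h1 := hcomplex.tendsto_sum_nat
    have h2 : Filter.Tendsto (fun K : ℕ => K + 1) Filter.atTop Filter.atTop :=
      Filter.tendsto_add_atTop_nat 1
    have h3 := h1.comp h2
    convert h3 using 2 with K
    rw [sum_mBox_Bcoef]
    refine Finset.sum_congr rfl fun k _ => ?_
    rw [choose_swap]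
  have := tendsto_nhds_unique htend1 htend2
  rw [← this]
  exact hsummable.hasSum

end Expansion

/-! ### The coefficients of the Cauchy transform -/

lemma norm_coord_le {n : ℕ} (ζ : En n) (i : Fin n) : ‖ζ i‖ ≤ ‖ζ‖ := by
  rw [EuclideanSpace.norm_eq]
  have h1 : ‖ζ i‖ = Real.sqrt (‖ζ i‖ ^ 2) := by
    rw [Real.sqrt_sq (norm_nonneg _)]
  rw [h1]
  apply Real.sqrt_le_sqrt
  exact Finset.single_le_sum (f := fun i => ‖ζ i‖ ^ 2) (fun i _ => by positivity)
    (Finset.mem_univ i)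

lemma sum_norm_mul_le {n : ℕ} (z ζ : En n) : ∑ i, ‖z i * ζ i‖ ≤ ‖z‖ * ‖ζ‖ := by
  simp only [norm_mul]
  calc ∑ i, ‖z i‖ * ‖ζ i‖ ≤ Real.sqrt (∑ i, ‖z i‖^2) * Real.sqrt (∑ i, ‖ζ i‖^2) :=
        Real.sum_mul_le_sqrt_mul_sqrt Finset.univ _ _
    _ = ‖z‖ * ‖ζ‖ := by rw [EuclideanSpace.norm_eq, EuclideanSpace.norm_eq]

/-- the coefficients of the Cauchy transform -/
def cCoef (n : ℕ) (μ : Measure (En n)) (j : Fin n → ℕ) : ℂ :=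
  (Bcoef n j : ℂ) * ∫ ζ, mPow ζ j ∂μ

lemma cpow_neg_nat (w : ℂ) (n : ℕ) : w ^ (-(n : ℂ)) = 1 / w ^ n := by
  rw [Complex.cpow_neg, Complex.cpow_natCast, one_div]

lemma hasCoeffs_cauchyT (n : ℕ) (hn : 1 ≤ n) (μ : Measure (En n)) [IsFiniteMeasure μ]
    (hμ : μ (Metric.sphere (0 : En n) 1)ᶜ = 0) :
    HasCoeffs n (cauchyT n μ) (cCoef n μ) := by
  intro z hz
  rw [Metric.mem_ball, dist_zero_right] at hz
  have hsph : ∀ᵐ ζ ∂μ, ζ ∈ Metric.sphere (0 : En n) 1 := (ae_iff).2 hμ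
  have hkey : ∀ ζ : En n, ζ ∈ Metric.sphere (0 : En n) 1 →
      ∑ i, ‖z i * ζ i‖ ≤ ‖z‖ := by
    intro ζ hζ
    rw [Metric.mem_sphere, dist_zero_right] at hζ
    calc ∑ i, ‖z i * ζ i‖ ≤ ‖z‖ * ‖ζ‖ := sum_norm_mul_le z ζ
      _ = ‖z‖ := by rw [hζ, mul_one]
  set F : (Fin n → ℕ) → En n → ℂ :=
    fun j ζ => (Bcoef n j : ℂ) * ∏ i, (z i * ζ i) ^ j i with hF
  have hFnorm : ∀ j ζ, ‖F j ζ‖ = (Bcoef n j : ℝ) * ∏ i, ‖z i * ζ i‖ ^ j i :=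
    fun j ζ => norm_Bcoef_term n _ j
  have hmeas : ∀ j, AEStronglyMeasurable (F j) μ := by
    intro j
    apply Continuous.aestronglyMeasurable
    apply continuous_const.mul
    apply continuous_finset_prod
    intro i _
    exact ((continuous_const.mul
      ((EuclideanSpace.proj i).continuous.comp continuous_id)).pow _)
  have hFle : ∀ j, ∀ᵐ ζ ∂μ, ‖F j ζ‖ ≤ (Bcoef n j : ℝ) * ∏ i, ‖z i‖ ^ j i := by
    intro j
    filter_upwards [hsph] with ζ hζ
    rw [hFnorm]
    rw [Metric.mem_sphere, dist_zero_right] at hζ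
    have hprod : ∏ i, ‖z i * ζ i‖ ^ j i ≤ ∏ i, ‖z i‖ ^ j i := by
      refine Finset.prod_le_prod (fun i _ => by positivity) (fun i _ => ?_)
      apply pow_le_pow_left₀ (norm_nonneg _)
      rw [norm_mul]
      calc ‖z i‖ * ‖ζ i‖ ≤ ‖z i‖ * ‖ζ‖ :=
            mul_le_mul_of_nonneg_left (norm_coord_le ζ i) (norm_nonneg _)
        _ = ‖z i‖ := by rw [hζ, mul_one]
    exact mul_le_mul_of_nonneg_left hprod (by positivity)
  have hint : ∀ j, Integrable (F j) μ := by
    intro j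
    exact (integrable_const ((Bcoef n j : ℝ) * ∏ i, ‖z i‖ ^ j i)).mono' (hmeas j) (hFle j)
  have hz1 : (0:ℝ) < 1 - ‖z‖ := by linarith
  have hptbound : ∀ᵐ ζ ∂μ, ∀ S : Finset (Fin n → ℕ),
      ∑ j ∈ S, ‖F j ζ‖ ≤ 1 / (1 - ‖z‖) ^ n := by
    filter_upwards [hsph] with ζ hζ S
    have hu : ∑ i, ‖z i * ζ i‖ ≤ ‖z‖ := hkey ζ hζ
    have hu1 : ∑ i, ‖(‖z i * ζ i‖ : ℝ)‖ < 1 := by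
      simpa [Real.norm_eq_abs, _root_.abs_of_nonneg (norm_nonneg _)] using lt_of_le_of_lt hu hz
    have hR := hasSum_Bcoef (𝕜 := ℝ) n hn (fun i => ‖z i * ζ i‖) hu1
    calc ∑ j ∈ S, ‖F j ζ‖ = ∑ j ∈ S, (Bcoef n j : ℝ) * ∏ i, ‖z i * ζ i‖ ^ j i :=
          Finset.sum_congr rfl fun j _ => hFnorm j ζ
      _ ≤ 1 / (1 - ∑ i, ‖z i * ζ i‖) ^ n :=
          sum_le_hasSum S (fun j _ => by positivity) hR
      _ ≤ 1 / (1 - ‖z‖) ^ n := by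
          apply one_div_le_one_div_of_le (pow_pos hz1 n)
          apply pow_le_pow_left₀ hz1.le
          linarith
  have hsumint : Summable (fun j => ∫ ζ, ‖F j ζ‖ ∂μ) := by
    apply summable_of_sum_le (fun j => integral_nonneg fun ζ => norm_nonneg _)
    intro S
    calc ∑ j ∈ S, ∫ ζ, ‖F j ζ‖ ∂μ = ∫ ζ, ∑ j ∈ S, ‖F j ζ‖ ∂μ :=
          (integral_finset_sum S fun j _ => (hint j).norm).symm
      _ ≤ ∫ _, 1 / (1 - ‖z‖) ^ n ∂μ := by
          apply integral_mono_ae (integrable_finset_sum S fun j _ => (hint j).norm)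
            (integrable_const _)
          filter_upwards [hptbound] with ζ h using h S
      _ = (μ Set.univ).toReal * (1 / (1 - ‖z‖) ^ n) := by
          rw [integral_const]; simp [smul_eq_mul, measureReal_def]
  have hmain := hasSum_integral_of_summable_integral_norm hint hsumint
  have h1 : ∀ j, ∫ ζ, F j ζ ∂μ = cCoef n μ j * mPow z j := by
    intro j
    have : ∀ ζ : En n, F j ζ = ((Bcoef n j : ℂ) * mPow z j) * mPow ζ j := by
      intro ζ
      simp only [hF, mPow, mul_pow, Finset.prod_mul_distrib]
      ring
    simp_rw [this]
    rw [integral_const_mul, cCoef]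
    ring
  have h2 : ∫ ζ, ∑' j, F j ζ ∂μ = cauchyT n μ z := by
    apply integral_congr_ae
    filter_upwards [hsph] with ζ hζ
    have hu : ∑ i, ‖z i * ζ i‖ ≤ ‖z‖ := hkey ζ hζ
    have hu1 : ∑ i, ‖z i * ζ i‖ < 1 := lt_of_le_of_lt hu hz
    have hC := hasSum_Bcoef (𝕜 := ℂ) n hn (fun i => z i * ζ i) hu1
    rw [hC.tsum_eq, cpow_neg_nat]
  rw [h2] at hmain
  have : (fun j => ∫ ζ, F j ζ ∂μ) = fun j => cCoef n μ j * mPow z j := funext h1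
  rwa [this] at hmain


/-! ### Uniqueness of power-series coefficients -/

section Uniqueness

attribute [local instance] MeasureTheory.Measure.Subtype.measureSpace

abbrev Tor : Type := Set.Ioc (0:ℝ) (2*π)

instance : IsFiniteMeasure (volume : Measure Tor) := by
  constructor
  rw [MeasureTheory.Measure.Subtype.volume_univ measurableSet_Ioc.nullMeasurableSet]
  exact measure_Ioc_lt_top

lemma integral_exp_torus (m : ℤ) :
    ∫ t : Tor, Complex.exp (m * (t:ℝ) * Complex.I) =
      if m = 0 then ((2*π : ℝ) : ℂ) else 0 := by
  rw [show (∫ t : Tor, Complex.exp (m * (t:ℝ) * Complex.I))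
      = ∫ x in Set.Ioc (0:ℝ) (2*π), Complex.exp (m * x * Complex.I) from
    integral_subtype measurableSet_Ioc (fun x : ℝ => Complex.exp (m * x * Complex.I))]
  have h2π : (0:ℝ) ≤ 2*π := by positivity
  rw [← intervalIntegral.integral_of_le h2π]
  by_cases hm : m = 0
  · simp only [hm, Int.cast_zero, zero_mul, Complex.exp_zero, if_true]
    simp [intervalIntegral.integral_const]
  · rw [if_neg hm]
    have hc : (m : ℂ) * Complex.I ≠ 0 := by
      simp [Complex.I_ne_zero, Int.cast_eq_zero, hm]
    have : ∀ t : ℝ, (m:ℂ) * (t:ℝ) * Complex.I = ((m:ℂ) * Complex.I) * (t:ℝ) := by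
      intro t; ring
    simp_rw [this]
    rw [integral_exp_mul_complex hc]
    have h1 : Complex.exp ((m:ℂ) * Complex.I * (2*π:ℝ)) = 1 := by
      have := Complex.exp_int_mul_two_pi_mul_I m
      rw [← this]
      congr 1
      push_cast
      ring
    rw [h1]
    simp

/-- single-coordinate integral -/
lemma integral_g (ρ : ℝ) (m l : ℕ) :
    ∫ t : Tor, ((ρ:ℂ) * Complex.exp ((t:ℝ) * Complex.I)) ^ m *
        Complex.exp (-(l:ℂ) * (t:ℝ) * Complex.I)
      = (ρ:ℂ)^m * (if m = l then ((2*π:ℝ):ℂ) else 0) := by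
  have key : ∀ t : Tor, ((ρ:ℂ) * Complex.exp ((t:ℝ) * Complex.I)) ^ m *
      Complex.exp (-(l:ℂ) * (t:ℝ) * Complex.I)
      = (ρ:ℂ)^m * Complex.exp ((((m:ℤ) - (l:ℤ) : ℤ) : ℂ) * (t:ℝ) * Complex.I) := by
    intro t
    rw [mul_pow, ← Complex.exp_nat_mul, mul_assoc, ← Complex.exp_add]
    congr 2
    push_cast
    ring
  simp_rw [key]
  rw [integral_const_mul, integral_exp_torus]
  congr 1
  by_cases h : m = l
  · simp [h]
  · rw [if_neg h, if_neg (by omega)]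

/-- Uniqueness: a power series summing to 0 on the ball has zero coefficients. -/
lemma coeffs_zero (n : ℕ) (hn : 1 ≤ n) (c : (Fin n → ℕ) → ℂ)
    (hc : ∀ z ∈ Metric.ball (0 : En n) 1, HasSum (fun k => c k * mPow z k) 0) :
    c = 0 := by
  set ρ : ℝ := (2 * Real.sqrt n)⁻¹ with hρdef
  have hsqrt : 0 < Real.sqrt n := Real.sqrt_pos.2 (by exact_mod_cast hn)
  have hρ : 0 < ρ := by positivity
  have hball : ∀ w : En n, (∀ i, ‖w i‖ = ρ) → w ∈ Metric.ball (0 : En n) 1 := by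
    intro w hw
    rw [Metric.mem_ball, dist_zero_right, EuclideanSpace.norm_eq]
    have : ∑ i, ‖w i‖^2 = n * ρ^2 := by
      simp_rw [hw]; rw [Finset.sum_const]; simp [mul_comm]
    rw [this]
    have h1 : Real.sqrt ((n:ℝ) * ρ^2) = Real.sqrt n * ρ := by
      rw [Real.sqrt_mul (by positivity), Real.sqrt_sq hρ.le]
    rw [h1, hρdef]
    rw [mul_inv]
    have : Real.sqrt n * (2⁻¹ * (Real.sqrt n)⁻¹) = 2⁻¹ := by
      field_simp
    rw [this]
    norm_num
  set Z : (Fin n → Tor) → En n := fun θ => WithLp.toLp 2 (fun i => (ρ:ℂ) * Complex.exp ((θ i : ℝ) * Complex.I))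
    with hZdef
  have hZnorm : ∀ θ i, ‖Z θ i‖ = ρ := by
    intro θ i
    simp only [hZdef, PiLp.toLp_apply, norm_mul, Complex.norm_real]
    rw [Complex.norm_exp_ofReal_mul_I]
    simp [_root_.abs_of_nonneg hρ.le]
  have hZball : ∀ θ, Z θ ∈ Metric.ball (0 : En n) 1 := fun θ => hball _ (hZnorm θ)
  have hz0 : (WithLp.toLp 2 (fun _ => (ρ:ℂ)) : En n) ∈ Metric.ball (0 : En n) 1 := by
    apply hball
    intro i
    simp [Complex.norm_real, _root_.abs_of_nonneg hρ.le]
  have hS : Summable (fun k : Fin n → ℕ => ‖c k‖ * ρ ^ mOrd k) := by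
    have h1 := (hc _ hz0).summable
    have h2 : Summable (fun k : Fin n → ℕ => ‖c k * mPow (WithLp.toLp 2 (fun _ => (ρ:ℂ))) k‖) :=
      summable_norm_iff.mpr h1
    convert h2 using 2 with k
    rw [norm_mul, mPow, norm_prod]
    congr 1
    simp_rw [norm_pow, Complex.norm_real, Real.norm_eq_abs, _root_.abs_of_nonneg hρ.le]
    rw [Finset.prod_pow_eq_pow_sum]
    rfl
  funext j
  set G : (Fin n → ℕ) → (Fin n → Tor) → ℂ := fun k θ =>
    c k * ∏ i, (((ρ:ℂ) * Complex.exp ((θ i : ℝ) * Complex.I)) ^ k i *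
      Complex.exp (-(j i : ℂ) * (θ i : ℝ) * Complex.I)) with hGdef
  have hGsplit : ∀ k θ, G k θ = (c k * mPow (Z θ) k) *
      ∏ i, Complex.exp (-(j i : ℂ) * (θ i : ℝ) * Complex.I) := by
    intro k θ
    simp only [hGdef, mPow, hZdef, PiLp.toLp_apply, Finset.prod_mul_distrib]
    ring
  have hGnorm : ∀ k θ, ‖G k θ‖ = ‖c k‖ * ρ ^ mOrd k := by
    intro k θ
    rw [hGsplit, norm_mul, norm_mul, norm_prod]
    have he : ∀ i, ‖Complex.exp (-(j i : ℂ) * (θ i : ℝ) * Complex.I)‖ = 1 := by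
      intro i
      rw [Complex.norm_exp]
      have : (-(j i : ℂ) * (θ i : ℝ) * Complex.I).re = 0 := by
        simp [Complex.mul_re, Complex.mul_im]
      rw [this, Real.exp_zero]
    simp_rw [he]
    rw [Finset.prod_const_one, mul_one]
    congr 1
    rw [mPow, norm_prod]
    simp_rw [norm_pow, hZnorm]
    rw [Finset.prod_pow_eq_pow_sum]
    rfl
  have hGmeas : ∀ k, AEStronglyMeasurable (G k) volume := by
    intro k
    apply Continuous.aestronglyMeasurable
    apply continuous_const.mul
    apply continuous_finset_prod
    intro i _
    have hθ : Continuous fun θ : Fin n → Tor => ((θ i : ℝ) : ℂ) :=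
      Complex.continuous_ofReal.comp (continuous_subtype_val.comp (continuous_apply i))
    exact ((continuous_const.mul ((Complex.continuous_exp.comp (hθ.mul continuous_const)))).pow
      _).mul (Complex.continuous_exp.comp ((continuous_const.mul hθ).mul continuous_const))
  have hGint : ∀ k, Integrable (G k) volume := by
    intro k
    refine (integrable_const (‖c k‖ * ρ ^ mOrd k)).mono' (hGmeas k) ?_
    filter_upwards with θ
    rw [hGnorm]
  have hGsum0 : ∀ θ, HasSum (fun k => G k θ) 0 := by
    intro θ
    have h := (hc (Z θ) (hZball θ)).mul_right
      (∏ i, Complex.exp (-(j i : ℂ) * (θ i : ℝ) * Complex.I))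
    rw [zero_mul] at h
    simpa only [hGsplit] using h
  have hGintsum : Summable fun k => ∫ θ, ‖G k θ‖ := by
    have : (fun k => ∫ θ, ‖G k θ‖) = fun k =>
        (‖c k‖ * ρ ^ mOrd k) * (volume (Set.univ : Set (Fin n → Tor))).toReal := by
      funext k
      simp_rw [hGnorm]
      rw [integral_const, smul_eq_mul, mul_comm, measureReal_def]
    rw [this]
    exact hS.mul_right _
  have hswap := integral_tsum_of_summable_integral_norm hGint hGintsum
  have hzero : (∫ θ, ∑' k, G k θ) = 0 := by
    have : ∀ θ, ∑' k, G k θ = (0:ℂ) := fun θ => (hGsum0 θ).tsum_eq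
    simp_rw [this, integral_zero]
  rw [hzero] at hswap
  have hint_eq : ∀ k, (∫ θ, G k θ) =
      c k * ∏ i, ((ρ:ℂ)^(k i) * (if k i = j i then ((2*π:ℝ):ℂ) else 0)) := by
    intro k
    rw [hGdef]
    simp only
    rw [integral_const_mul]
    congr 1
    rw [MeasureTheory.volume_pi, MeasureTheory.integral_fintype_prod_eq_prod (𝕜 := ℂ) (ι := Fin n)
      (f := fun i (t : Tor) => ((ρ:ℂ) * Complex.exp ((t : ℝ) * Complex.I)) ^ k i *
        Complex.exp (-(j i : ℂ) * (t : ℝ) * Complex.I))]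
    exact Finset.prod_congr rfl fun i _ => integral_g ρ (k i) (j i)
  have hvanish : ∀ k, k ≠ j → (∫ θ, G k θ) = 0 := by
    intro k hk
    rw [hint_eq k]
    have : ∃ i, k i ≠ j i := by
      by_contra h
      push_neg at h
      exact hk (funext h)
    obtain ⟨i, hi⟩ := this
    apply mul_eq_zero_of_right
    apply Finset.prod_eq_zero (Finset.mem_univ i)
    rw [if_neg hi, mul_zero]
  have hjval : (∫ θ, G j θ) = c j * ((ρ:ℂ)^(mOrd j) * ((2*π:ℝ):ℂ)^n) := by
    rw [hint_eq j]
    congr 1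
    have hif : ∀ i : Fin n, (ρ:ℂ)^(j i) * (if j i = j i then ((2*π:ℝ):ℂ) else 0)
        = (ρ:ℂ)^(j i) * ((2*π:ℝ):ℂ) := fun i => by rw [if_pos rfl]
    rw [Finset.prod_congr rfl (fun i _ => hif i), Finset.prod_mul_distrib,
      Finset.prod_const, Finset.prod_pow_eq_pow_sum]
    rw [show (Finset.univ : Finset (Fin n)).card = n from by simp]
    rfl
  have htsum : ∑' k, (∫ θ, G k θ) = (∫ θ, G j θ) := tsum_eq_single j hvanish
  rw [hswap, hjval] at htsum
  have h2πn : ((ρ:ℂ)^(mOrd j) * ((2*π:ℝ):ℂ)^n) ≠ 0 := by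
    apply mul_ne_zero
    · exact pow_ne_zero _ (by exact_mod_cast hρ.ne')
    · apply pow_ne_zero
      simp only [ne_eq, Complex.ofReal_eq_zero]
      positivity
  have := htsum.symm
  rcases mul_eq_zero.1 this with h | h
  · simpa using h
  · exact absurd h h2πn

lemma coeffs_unique {n : ℕ} (hn : 1 ≤ n) {f : En n → ℂ} {a b : (Fin n → ℕ) → ℂ}
    (ha : HasCoeffs n f a) (hb : HasCoeffs n f b) : a = b := by
  have h : ∀ z ∈ Metric.ball (0 : En n) 1,
      HasSum (fun k => (a k - b k) * mPow z k) 0 := by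
    intro z hz
    have := (ha z hz).sub (hb z hz)
    rw [sub_self] at this
    simpa only [sub_mul] using this
  have h0 := coeffs_zero n hn _ h
  funext j
  have := congrFun h0 j
  simp only [Pi.zero_apply] at this
  exact sub_eq_zero.1 this

end Uniqueness


/-! ### Weight comparison -/

section Comparison

lemma asc_le_pow_mul_fact (k : ℕ) : ∀ m : ℕ, (k+1).ascFactorial m ≤ (k+1)^m * m.factorial := by
  intro m
  induction m with
  | zero => simp
  | succ m ih =>
    rw [Nat.ascFactorial_succ]
    calc (k + 1 + m) * (k+1).ascFactorial m ≤ ((k+1) * (m+1)) * ((k+1)^m * m.factorial) := by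
          apply Nat.mul_le_mul _ ih
          nlinarith
      _ = (k+1)^(m+1) * (m+1).factorial := by
          rw [Nat.factorial_succ]
          ring

lemma fact_mul_choose_eq_asc (m k : ℕ) :
    m.factorial * ((m + k).choose k) = (k+1).ascFactorial m := by
  rw [Nat.ascFactorial_eq_factorial_mul_choose]
  congr 1
  rw [Nat.add_comm m k]
  exact Nat.choose_symm_add

lemma choose_le_pow' (m k : ℕ) : ((m + k).choose k : ℝ) ≤ (k+1:ℝ)^m := by
  have h : m.factorial * ((m + k).choose k) ≤ (k+1)^m * m.factorial := by
    rw [fact_mul_choose_eq_asc]; exact asc_le_pow_mul_fact k m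
  have h2 : (m + k).choose k ≤ (k+1)^m :=
    Nat.le_of_mul_le_mul_left (by linarith [h]) (Nat.factorial_pos m)
  exact_mod_cast h2

lemma pow_le_choose' (m k : ℕ) : ((k+1:ℝ))^m ≤ ((m + k).choose k : ℝ) * m.factorial := by
  have h : (k+1)^m ≤ m.factorial * ((m + k).choose k) := by
    rw [fact_mul_choose_eq_asc]; exact Nat.pow_succ_le_ascFactorial (k+1) m
  calc ((k+1:ℝ))^m = (((k+1)^m : ℕ) : ℝ) := by push_cast; ring
    _ ≤ ((m.factorial * ((m + k).choose k) : ℕ) : ℝ) := by exact_mod_cast h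
    _ = ((m + k).choose k : ℝ) * m.factorial := by push_cast; ring

lemma rpow_comparison (n : ℕ) (hn : 1 ≤ n) (α : ℝ) (k : ℕ) :
    (n:ℝ)^(-|α|) * ((k:ℝ)+1)^(-α) ≤ ((n:ℝ) + k)^(-α) ∧
      ((n:ℝ) + k)^(-α) ≤ (n:ℝ)^|α| * ((k:ℝ)+1)^(-α) := by
  have hn1 : (1:ℝ) ≤ n := by exact_mod_cast hn
  have hx : (0:ℝ) < (k:ℝ)+1 := by positivity
  have hy : (0:ℝ) < (n:ℝ)+k := by positivity
  have hxy : (k:ℝ)+1 ≤ (n:ℝ)+k := by linarith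
  have hyn : (n:ℝ)+k ≤ (n:ℝ) * ((k:ℝ)+1) := by nlinarith
  rcases le_or_gt 0 α with hα | hα
  · have habs : |α| = α := abs_of_nonneg hα
    constructor
    · rw [habs, ← Real.mul_rpow (by positivity) (by positivity)]
      exact Real.rpow_le_rpow_of_nonpos hy hyn (by linarith)
    · calc ((n:ℝ) + k)^(-α) ≤ ((k:ℝ)+1)^(-α) :=
            Real.rpow_le_rpow_of_nonpos hx hxy (by linarith)
        _ ≤ (n:ℝ)^|α| * ((k:ℝ)+1)^(-α) := by
            nlinarith [Real.one_le_rpow hn1 (abs_nonneg α), Real.rpow_nonneg hx.le (-α)]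
  · have habs : |α| = -α := abs_of_neg hα
    constructor
    · rw [habs]
      calc (n:ℝ)^(-(-α)) * ((k:ℝ)+1)^(-α) ≤ 1 * ((k:ℝ)+1)^(-α) := by
            apply mul_le_mul_of_nonneg_right _ (Real.rpow_nonneg hx.le _)
            rw [neg_neg]
            exact Real.rpow_le_one_of_one_le_of_nonpos hn1 hα.le
        _ = ((k:ℝ)+1)^(-α) := one_mul _
        _ ≤ ((n:ℝ)+k)^(-α) := Real.rpow_le_rpow hx.le hxy (by linarith)
    · rw [habs]
      calc ((n:ℝ) + k)^(-α) ≤ ((n:ℝ) * ((k:ℝ)+1))^(-α) :=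
            Real.rpow_le_rpow hy.le hyn (by linarith)
        _ = (n:ℝ)^(-α) * ((k:ℝ)+1)^(-α) := Real.mul_rpow (by positivity) (by positivity)

lemma Bcoef_mul_eq (n : ℕ) {j : Fin n → ℕ} :
    Bcoef n j * ((n-1).factorial * mFact j) = (n - 1 + mOrd j).factorial := by
  have h1 : mFact j * Nat.multinomial Finset.univ j = (mOrd j).factorial := by
    have := Nat.multinomial_spec (Finset.univ) j
    simpa [mFact, mOrd] using this
  have h2 : (n - 1 + mOrd j).choose (mOrd j) * (mOrd j).factorial * (n-1).factorial
      = (n - 1 + mOrd j).factorial := by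
    have := Nat.choose_mul_factorial_mul_factorial
      (show mOrd j ≤ n - 1 + mOrd j from Nat.le_add_left _ _)
    simpa [Nat.add_sub_cancel] using this
  calc Bcoef n j * ((n-1).factorial * mFact j)
      = (n - 1 + mOrd j).choose (mOrd j) * (mFact j * Nat.multinomial Finset.univ j)
          * (n-1).factorial := by rw [Bcoef]; ring
    _ = (n - 1 + mOrd j).factorial := by rw [h1, h2]

lemma Bcoef_real (n : ℕ) (j : Fin n → ℕ) :
    (Bcoef n j : ℝ) = ((n - 1 + mOrd j).choose (mOrd j) : ℝ)
      * ((mOrd j).factorial : ℝ) / (mFact j : ℝ) := by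
  have hm : (0:ℝ) < (mFact j : ℝ) := by
    have : 0 < mFact j := Finset.prod_pos fun i _ => Nat.factorial_pos _
    exact_mod_cast this
  rw [eq_div_iff hm.ne']
  have h1 : mFact j * Nat.multinomial Finset.univ j = (mOrd j).factorial := by
    have := Nat.multinomial_spec (Finset.univ) j
    simpa [mFact, mOrd] using this
  rw [Bcoef]
  push_cast [← h1]
  ring

lemma dweight_estimate (n : ℕ) (hn : 1 ≤ n) (α : ℝ) (j : Fin n → ℕ) :
    ((n:ℝ)^(-|α|) / (n-1).factorial) *
        (((mOrd j : ℝ) + 1) ^ ((n : ℝ) - 1 - α) * (((mOrd j).factorial : ℝ) / (mFact j : ℝ)))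
      ≤ dWeight n (-α) j * (Bcoef n j : ℝ)^2 ∧
    dWeight n (-α) j * (Bcoef n j : ℝ)^2
      ≤ (n:ℝ)^|α| *
        (((mOrd j : ℝ) + 1) ^ ((n : ℝ) - 1 - α) * (((mOrd j).factorial : ℝ) / (mFact j : ℝ))) := by
  set k := mOrd j with hk
  set m := n - 1 with hm
  have hmn : m + 1 = n := by omega
  have hmfact : (0:ℝ) < (mFact j : ℝ) := by
    have : 0 < mFact j := Finset.prod_pos fun i _ => Nat.factorial_pos _
    exact_mod_cast this
  have hQ : (0:ℝ) < ((k).factorial : ℝ) / (mFact j : ℝ) := by positivity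
  set Q : ℝ := ((k).factorial : ℝ) / (mFact j : ℝ) with hQdef
  have hx : (0:ℝ) < (k:ℝ)+1 := by positivity
  have hmn' : ((m:ℕ):ℝ) + 1 = (n:ℝ) := by exact_mod_cast congrArg (fun t : ℕ => (t:ℝ)) hmn
  have hchoose_pos : (0:ℝ) ≤ ((m + k).choose k : ℝ) := by positivity
  have hfactm : (0:ℝ) < ((m:ℕ).factorial : ℝ) := by exact_mod_cast Nat.factorial_pos m
  have hBQ : (Bcoef n j : ℝ) = ((m + k).choose k : ℝ) * Q := by
    rw [Bcoef_real, hQdef, ← hk, ← hm, mul_div_assoc]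
  have hPB : (Bcoef n j : ℝ) * (((n-1).factorial * mFact j : ℕ) : ℝ)
      = ((m + k).factorial : ℝ) := by
    exact_mod_cast congrArg (fun t : ℕ => (t:ℝ)) (Bcoef_mul_eq n (j := j))
  have hP : (0:ℝ) < ((m + k).factorial : ℝ) := by exact_mod_cast Nat.factorial_pos _
  have hDB : dWeight n (-α) j * (Bcoef n j : ℝ)^2
      = ((n:ℝ) + k)^(-α) * (((m + k).choose k : ℝ) * Q) := by
    have expand : dWeight n (-α) j = ((n:ℝ) + (k:ℝ))^(-α)
        * (((n-1).factorial * mFact j : ℕ) : ℝ) / (((m + k).factorial : ℕ) : ℝ) := by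
      rw [dWeight, ← hk, ← hm]
    calc dWeight n (-α) j * (Bcoef n j : ℝ)^2
        = ((n:ℝ) + (k:ℝ))^(-α) * (Bcoef n j : ℝ)
            * ((Bcoef n j : ℝ) * (((n-1).factorial * mFact j : ℕ) : ℝ))
            / ((m + k).factorial : ℝ) := by rw [expand]; ring
      _ = ((n:ℝ) + (k:ℝ))^(-α) * (Bcoef n j : ℝ)
            * ((m + k).factorial : ℝ) / ((m + k).factorial : ℝ) := by rw [hPB]
      _ = ((n:ℝ) + (k:ℝ))^(-α) * (Bcoef n j : ℝ) := by field_simp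
      _ = ((n:ℝ) + k)^(-α) * (((m + k).choose k : ℝ) * Q) := by rw [hBQ]
  have hsplit : ((k:ℝ)+1)^((n:ℝ)-1-α) = ((k:ℝ)+1)^(m:ℕ) * ((k:ℝ)+1)^(-α) := by
    have h1 : (n:ℝ)-1-α = ((m:ℕ):ℝ) + (-α) := by linarith
    rw [h1, Real.rpow_add hx, Real.rpow_natCast]
  have hrpow := rpow_comparison n hn α k
  have hA0 : (0:ℝ) ≤ ((n:ℝ)+k)^(-α) := Real.rpow_nonneg (by positivity) _
  have hk1α0 : (0:ℝ) ≤ ((k:ℝ)+1)^(-α) := Real.rpow_nonneg hx.le _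
  have hnabs0 : (0:ℝ) ≤ (n:ℝ)^(-|α|) := Real.rpow_nonneg (by positivity) _
  have hnabs0' : (0:ℝ) ≤ (n:ℝ)^|α| := Real.rpow_nonneg (by positivity) _
  have hlowchoose : ((k:ℝ)+1)^(m:ℕ) / ((m:ℕ).factorial : ℝ) ≤ ((m + k).choose k : ℝ) := by
    rw [div_le_iff₀ hfactm]
    exact pow_le_choose' m k
  have hupchoose : ((m + k).choose k : ℝ) ≤ ((k:ℝ)+1)^(m:ℕ) := choose_le_pow' m k
  rw [hDB, hsplit]
  constructor
  · have step1 : ((n:ℝ)^(-|α|) * ((k:ℝ)+1)^(-α)) * (((k:ℝ)+1)^(m:ℕ) / ((m:ℕ).factorial : ℝ))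
        ≤ ((n:ℝ)+k)^(-α) * ((m + k).choose k : ℝ) :=
      mul_le_mul hrpow.1 hlowchoose (by positivity) hA0
    calc ((n:ℝ)^(-|α|) / (n-1).factorial) * (((k:ℝ)+1)^(m:ℕ) * ((k:ℝ)+1)^(-α) * Q)
        = (((n:ℝ)^(-|α|) * ((k:ℝ)+1)^(-α)) * (((k:ℝ)+1)^(m:ℕ) / ((m:ℕ).factorial : ℝ))) * Q := by
          rw [← hm]; ring
      _ ≤ (((n:ℝ)+k)^(-α) * ((m + k).choose k : ℝ)) * Q :=
          mul_le_mul_of_nonneg_right step1 hQ.le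
      _ = ((n:ℝ)+k)^(-α) * (((m + k).choose k : ℝ) * Q) := by ring
  · have step1 : ((n:ℝ)+k)^(-α) * ((m + k).choose k : ℝ)
        ≤ ((n:ℝ)^|α| * ((k:ℝ)+1)^(-α)) * ((k:ℝ)+1)^(m:ℕ) :=
      mul_le_mul hrpow.2 hupchoose hchoose_pos (by positivity)
    calc ((n:ℝ)+k)^(-α) * (((m + k).choose k : ℝ) * Q)
        = (((n:ℝ)+k)^(-α) * ((m + k).choose k : ℝ)) * Q := by ring
      _ ≤ (((n:ℝ)^|α| * ((k:ℝ)+1)^(-α)) * ((k:ℝ)+1)^(m:ℕ)) * Q :=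
          mul_le_mul_of_nonneg_right step1 hQ.le
      _ = (n:ℝ)^|α| * (((k:ℝ)+1)^(m:ℕ) * ((k:ℝ)+1)^(-α) * Q) := by ring

end Comparison

end Aux

/-- for every finite positive Borel measure `μ` on the unit sphere,
`‖C_[μ]‖²_{-α} ≍ Σ_k Σ_{|j|=k} (k+1)^{n-1-α}(k!/j!)|μ*(j)|²`, with constants depending
only on `n` and `α`. -/
theorem stmt_13 (n : ℕ) (hn : 1 ≤ n) (α : ℝ) :
    ∃ c C : ℝ, 0 < c ∧ 0 < C ∧
      ∀ μ : Measure (En n), IsFiniteMeasure μ → μ (Metric.sphere (0 : En n) 1)ᶜ = 0 →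
        ENNReal.ofReal c * momSum n α μ ≤ DnormF2 n (-α) (cauchyT n μ) ∧
          DnormF2 n (-α) (cauchyT n μ) ≤ ENNReal.ofReal C * momSum n α μ := by
  have hn0 : (0:ℝ) < n := by exact_mod_cast hn
  refine ⟨(n:ℝ)^(-|α|) / (n-1).factorial, (n:ℝ)^|α|, ?_, ?_, ?_⟩
  · apply div_pos (Real.rpow_pos_of_pos hn0 _)
    exact_mod_cast Nat.factorial_pos (n-1)
  · exact Real.rpow_pos_of_pos hn0 _
  intro μ hfm hμ
  haveI := hfm
  have ha := hasCoeffs_cauchyT n hn μ hμ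
  have hc0 : (0:ℝ) ≤ (n:ℝ)^(-|α|) / (n-1).factorial := by
    have := Real.rpow_nonneg hn0.le (-|α|)
    positivity
  have hC0 : (0:ℝ) ≤ (n:ℝ)^|α| := Real.rpow_nonneg hn0.le _
  have hD : DnormF2 n (-α) (cauchyT n μ) = Dnorm2 n (-α) (cCoef n μ) := by
    apply le_antisymm
    · exact sInf_le ⟨cCoef n μ, ha, rfl⟩
    · apply le_sInf
      rintro x ⟨b, hb, rfl⟩
      rw [coeffs_unique hn ha hb]
  have hterm : ∀ j : Fin n → ℕ, dWeight n (-α) j * ‖cCoef n μ j‖^2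
      = (dWeight n (-α) j * (Bcoef n j:ℝ)^2) * ‖∫ ζ, mPow ζ j ∂μ‖^2 := by
    intro j
    rw [cCoef, norm_mul, mul_pow]
    have : ‖(Bcoef n j : ℂ)‖ = (Bcoef n j : ℝ) := by
      simp [Complex.norm_natCast]
    rw [this]
    ring
  rw [hD]
  constructor
  · rw [Dnorm2, momSum, ← ENNReal.tsum_mul_left]
    apply ENNReal.tsum_le_tsum
    intro j
    rw [← ENNReal.ofReal_mul hc0]
    apply ENNReal.ofReal_le_ofReal
    rw [hterm j]
    have est := (dweight_estimate n hn α j).1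
    calc ((n:ℝ)^(-|α|) / (n-1).factorial) * (((mOrd j : ℝ) + 1) ^ ((n : ℝ) - 1 - α) *
            (((mOrd j).factorial : ℝ) / (mFact j : ℝ)) * ‖∫ ζ, mPow ζ j ∂μ‖ ^ 2)
        = (((n:ℝ)^(-|α|) / (n-1).factorial) * (((mOrd j : ℝ) + 1) ^ ((n : ℝ) - 1 - α) *
            (((mOrd j).factorial : ℝ) / (mFact j : ℝ)))) * ‖∫ ζ, mPow ζ j ∂μ‖ ^ 2 := by ring
      _ ≤ (dWeight n (-α) j * (Bcoef n j:ℝ)^2) * ‖∫ ζ, mPow ζ j ∂μ‖ ^ 2 :=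
          mul_le_mul_of_nonneg_right est (by positivity)
  · rw [Dnorm2, momSum, ← ENNReal.tsum_mul_left]
    apply ENNReal.tsum_le_tsum
    intro j
    rw [← ENNReal.ofReal_mul hC0]
    apply ENNReal.ofReal_le_ofReal
    rw [hterm j]
    have est := (dweight_estimate n hn α j).2
    calc (dWeight n (-α) j * (Bcoef n j:ℝ)^2) * ‖∫ ζ, mPow ζ j ∂μ‖ ^ 2
        ≤ ((n:ℝ)^|α| * (((mOrd j : ℝ) + 1) ^ ((n : ℝ) - 1 - α) *
            (((mOrd j).factorial : ℝ) / (mFact j : ℝ)))) * ‖∫ ζ, mPow ζ j ∂μ‖ ^ 2 :=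
          mul_le_mul_of_nonneg_right est (by positivity)
      _ = (n:ℝ)^|α| * (((mOrd j : ℝ) + 1) ^ ((n : ℝ) - 1 - α) *
            (((mOrd j).factorial : ℝ) / (mFact j : ℝ)) * ‖∫ ζ, mPow ζ j ∂μ‖ ^ 2) := by ring
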